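/- For a finite graph Γ₁ with root o₁ and a finite rooted graph (Γ₂,o₂), the reciprocal Green functions of the comb product satisfy F_{Γ₁▷Γ₂}(z) = F_{Γ₁}(F_{Γ₂}(z)) wherever both sides are defined. -/

import Mathlib

open Matrix
open Classical

/-- The adjacency matrix of a finite simple graph, with complex entries. -/
noncomputable def adjMat {V : Type*} [Fintype V] (G : SimpleGraph V) : Matrix V V ℂ :=
  Matrix.of fun i j => if G.Adj i j then 1 else 0

/-- The comb product `Γ₁ ▷ (Γ₂,o₂)`: a copy of `Γ₂` is glued at its root `o₂` to every
vertex of `Γ₁`. -/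
def combProd {V₁ V₂ : Type*} (G₁ : SimpleGraph V₁) (G₂ : SimpleGraph V₂) (o₂ : V₂) :
    SimpleGraph (V₁ × V₂) where
  Adj p q := (G₁.Adj p.1 q.1 ∧ p.2 = o₂ ∧ q.2 = o₂) ∨ (p.1 = q.1 ∧ G₂.Adj p.2 q.2)
  symm := by
    constructor
    rintro p q (⟨h, h2, h3⟩ | ⟨h, h2⟩)
    · exact Or.inl ⟨h.symm, h3, h2⟩
    · exact Or.inr ⟨h.symm, h2.symm⟩
  loopless := by
    constructor
    rintro p (⟨h, -, -⟩ | ⟨-, h⟩)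
    · exact G₁.irrefl h
    · exact G₂.irrefl h

open Kronecker

/-- The matrix unit at `(o, o)`. -/
noncomputable def matE {V : Type*} [DecidableEq V] (o : V) : Matrix V V ℂ :=
  Matrix.of fun a b => if a = o ∧ b = o then (1 : ℂ) else 0

theorem matE_mul_right {V : Type*} [Fintype V] [DecidableEq V] (o : V)
    (X : Matrix V V ℂ) (a b : V) :
    (X * matE o) a b = if b = o then X a o else 0 := by
  simp [Matrix.mul_apply, matE, ite_and, mul_ite]

theorem matE_mul_left {V : Type*} [Fintype V] [DecidableEq V] (o : V)
    (X : Matrix V V ℂ) (a b : V) :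
    (matE o * X) a b = if a = o then X o b else 0 := by
  simp [Matrix.mul_apply, matE, ite_and, ite_mul]

theorem matE_sandwich {V : Type*} [Fintype V] [DecidableEq V] (o : V)
    (X : Matrix V V ℂ) : matE o * X * matE o = X o o • matE o := by
  ext a b
  rw [matE_mul_right, matE_mul_left]
  simp only [matE, Matrix.smul_apply, Matrix.of_apply, smul_eq_mul]
  split_ifs <;> simp_all

/-- Kronecker decomposition of the resolvent matrix of a comb product. -/
theorem comb_decomp {V₁ V₂ : Type*} [Fintype V₁] [Fintype V₂]
    [DecidableEq V₁] [DecidableEq V₂]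
    (G₁ : SimpleGraph V₁) (G₂ : SimpleGraph V₂) (o₂ : V₂) (z : ℂ) :
    z • (1 : Matrix (V₁ × V₂) (V₁ × V₂) ℂ) - adjMat (combProd G₁ G₂ o₂)
      = (1 : Matrix V₁ V₁ ℂ) ⊗ₖ (z • (1 : Matrix V₂ V₂ ℂ) - adjMat G₂)
        - adjMat G₁ ⊗ₖ matE o₂ := by
  ext ⟨i, a⟩ ⟨j, b⟩
  simp only [Matrix.sub_apply, Matrix.smul_apply, Matrix.one_apply, Matrix.kroneckerMap_apply,
    adjMat, matE, Matrix.of_apply, combProd, Prod.mk.injEq, smul_eq_mul]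
  by_cases hij : i = j <;> by_cases hab : a = b <;>
    simp_all <;> split_ifs <;> simp_all

/-- Muraki's composition formula for the reciprocal Green functions of a comb product
of rooted graphs: `F_{Γ₁▷Γ₂}(z) = F_{Γ₁}(F_{Γ₂}(z))` wherever both sides are defined.
Here `G_Γ(z) = ⟨(zI - A_Γ)⁻¹ δ_o, δ_o⟩`, `F_Γ = 1/G_Γ`, and the root of the comb
product is `(o₁,o₂)`. -/
theorem F_combProd {V₁ V₂ : Type*} [Fintype V₁] [Fintype V₂]
    [DecidableEq V₁] [DecidableEq V₂]
    (G₁ : SimpleGraph V₁) (o₁ : V₁) (G₂ : SimpleGraph V₂) (o₂ : V₂) (z : ℂ)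
    (h2 : IsUnit (z • (1 : Matrix V₂ V₂ ℂ) - adjMat G₂))
    (hg2 : (z • (1 : Matrix V₂ V₂ ℂ) - adjMat G₂)⁻¹ o₂ o₂ ≠ 0)
    (h1 : IsUnit ((((z • (1 : Matrix V₂ V₂ ℂ) - adjMat G₂)⁻¹ o₂ o₂)⁻¹)
      • (1 : Matrix V₁ V₁ ℂ) - adjMat G₁))
    (hg1 : ((((z • (1 : Matrix V₂ V₂ ℂ) - adjMat G₂)⁻¹ o₂ o₂)⁻¹
      • (1 : Matrix V₁ V₁ ℂ) - adjMat G₁)⁻¹ o₁ o₁) ≠ 0)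
    (hc : IsUnit (z • (1 : Matrix (V₁ × V₂) (V₁ × V₂) ℂ) - adjMat (combProd G₁ G₂ o₂)))
    (hgc : (z • (1 : Matrix (V₁ × V₂) (V₁ × V₂) ℂ)
      - adjMat (combProd G₁ G₂ o₂))⁻¹ (o₁, o₂) (o₁, o₂) ≠ 0) :
    ((z • (1 : Matrix (V₁ × V₂) (V₁ × V₂) ℂ)
        - adjMat (combProd G₁ G₂ o₂))⁻¹ (o₁, o₂) (o₁, o₂))⁻¹
      = ((((z • (1 : Matrix V₂ V₂ ℂ) - adjMat G₂)⁻¹ o₂ o₂)⁻¹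
          • (1 : Matrix V₁ V₁ ℂ) - adjMat G₁)⁻¹ o₁ o₁)⁻¹ := by
  set B : Matrix V₂ V₂ ℂ := z • (1 : Matrix V₂ V₂ ℂ) - adjMat G₂ with hBdef
  set g : ℂ := B⁻¹ o₂ o₂ with hgdef
  set A₁ : Matrix V₁ V₁ ℂ := adjMat G₁ with hA₁def
  set C : Matrix V₁ V₁ ℂ := g⁻¹ • (1 : Matrix V₁ V₁ ℂ) - A₁ with hCdef
  set E : Matrix V₂ V₂ ℂ := matE o₂ with hEdef
  -- basic invertibility facts
  have hBd : IsUnit B.det := (Matrix.isUnit_iff_isUnit_det B).mp h2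
  have hCd : IsUnit C.det := (Matrix.isUnit_iff_isUnit_det C).mp h1
  have hBB : B * B⁻¹ = 1 := Matrix.mul_nonsing_inv B hBd
  have hCC : C * C⁻¹ = 1 := Matrix.mul_nonsing_inv C hCd
  have hCC' : C⁻¹ * C = 1 := Matrix.nonsing_inv_mul C hCd
  -- definitions of the pieces of the explicit inverse
  set T : Matrix V₂ V₂ ℂ := B⁻¹ * E * B⁻¹ with hTdef
  set S : Matrix V₁ V₁ ℂ := g⁻¹ • (A₁ * C⁻¹) with hSdef
  set W : Matrix V₂ V₂ ℂ := E * B⁻¹ with hWdef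
  set N : Matrix (V₁ × V₂) (V₁ × V₂) ℂ := (1 : Matrix V₁ V₁ ℂ) ⊗ₖ B⁻¹ + S ⊗ₖ T with hNdef
  have hgg : g * g⁻¹ = 1 := mul_inv_cancel₀ hg2
  have hBT : B * T = W := by
    rw [hTdef, ← Matrix.mul_assoc, ← Matrix.mul_assoc, hBB, Matrix.one_mul]
  have hEBE : E * B⁻¹ * E = g • E := matE_sandwich o₂ B⁻¹
  have hET : E * T = g • W := by
    rw [hTdef, hWdef]
    calc E * (B⁻¹ * E * B⁻¹) = E * B⁻¹ * E * B⁻¹ := by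
          simp only [Matrix.mul_assoc]
      _ = g • (E * B⁻¹) := by rw [hEBE, Matrix.smul_mul]
  -- commutation of A₁ with C⁻¹
  have hcommC : C * A₁ = A₁ * C := by
    rw [hCdef, Matrix.sub_mul, Matrix.mul_sub, Matrix.smul_mul, Matrix.mul_smul,
      Matrix.one_mul, Matrix.mul_one]
  have hcomm : A₁ * C⁻¹ = C⁻¹ * A₁ := by
    calc A₁ * C⁻¹ = (C⁻¹ * C) * (A₁ * C⁻¹) := by rw [hCC', Matrix.one_mul]
      _ = C⁻¹ * (C * A₁) * C⁻¹ := by rw [Matrix.mul_assoc, Matrix.mul_assoc, Matrix.mul_assoc]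
      _ = C⁻¹ * (A₁ * C) * C⁻¹ := by rw [hcommC]
      _ = C⁻¹ * A₁ * (C * C⁻¹) := by simp only [Matrix.mul_assoc]
      _ = C⁻¹ * A₁ := by rw [hCC, Matrix.mul_one]
  -- the key algebraic identity
  have step : C * (A₁ * C⁻¹) = A₁ := by
    rw [hcomm, ← Matrix.mul_assoc, hCC, Matrix.one_mul]
  have expand : C * (A₁ * C⁻¹) = g⁻¹ • (A₁ * C⁻¹) - A₁ * (A₁ * C⁻¹) := by
    rw [hCdef, Matrix.sub_mul, Matrix.smul_mul, Matrix.one_mul]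
  have key : g⁻¹ • (A₁ * C⁻¹) = A₁ + A₁ * (A₁ * C⁻¹) :=
    sub_eq_iff_eq_add.mp (expand.symm.trans step)
  have h5 : g • (A₁ * S) = A₁ * (A₁ * C⁻¹) := by
    rw [hSdef, Matrix.mul_smul, smul_smul, hgg, one_smul]
  have hSeq : S = A₁ + g • (A₁ * S) := by rw [h5, hSdef, key]
  -- N is a right inverse of the kronecker decomposition
  have hMN : ((1 : Matrix V₁ V₁ ℂ) ⊗ₖ B - A₁ ⊗ₖ E) * N = 1 := by
    rw [hNdef]
    rw [Matrix.sub_mul, Matrix.mul_add, Matrix.mul_add,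
      ← Matrix.mul_kronecker_mul, ← Matrix.mul_kronecker_mul,
      ← Matrix.mul_kronecker_mul, ← Matrix.mul_kronecker_mul,
      Matrix.one_mul, Matrix.one_mul, Matrix.mul_one, hBB, hBT, hET,
      Matrix.kronecker_smul, Matrix.one_kronecker_one]
    have : S ⊗ₖ W = A₁ ⊗ₖ W + g • (A₁ * S) ⊗ₖ W := by
      rw [← Matrix.smul_kronecker, ← Matrix.add_kronecker, ← hSeq]
    rw [add_sub_assoc, this, sub_self, add_zero]
  have hMinv : (z • (1 : Matrix (V₁ × V₂) (V₁ × V₂) ℂ) - adjMat (combProd G₁ G₂ o₂))⁻¹ = N := by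
    apply Matrix.inv_eq_right_inv
    rw [comb_decomp]
    exact hMN
  -- entry computations
  have hTval : T o₂ o₂ = g * g := by
    rw [hTdef, Matrix.mul_assoc, Matrix.mul_apply]
    simp [hEdef, matE_mul_left, mul_ite, ← hgdef]
  have hACentry : (A₁ * C⁻¹) o₁ o₁ = g⁻¹ * C⁻¹ o₁ o₁ - 1 := by
    have hAC : A₁ * C⁻¹ = g⁻¹ • C⁻¹ - 1 := by
      have h := hCC
      rw [hCdef, Matrix.sub_mul, Matrix.smul_mul, Matrix.one_mul] at h
      exact eq_sub_of_add_eq (sub_eq_iff_eq_add'.mp h).symm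
    rw [hAC]
    simp [Matrix.sub_apply, Matrix.smul_apply, Matrix.one_apply]
  have hNroot : N (o₁, o₂) (o₁, o₂) = C⁻¹ o₁ o₁ := by
    rw [hNdef]
    simp only [Matrix.add_apply, Matrix.kroneckerMap_apply, Matrix.one_apply_eq,
      hSdef, Matrix.smul_apply, smul_eq_mul, hTval, hACentry]
    rw [← hgdef]
    field_simp
    try ring
  rw [hMinv, hNroot]
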